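/- Let (X, d, μ) be an irreversible metric measure space with probability measure μ and let β be a non-negative decreasing function on (0,∞). If for every 1-Lipschitz function f and every r > 0 one has μ({x : |f(x) − ∫ f dμ| ≥ r}) ≤ β(r), then for every Borel set A with μ(A) > 0 and every r > 0, 1 − μ(B⁺(A,r)) ≤ β(μ(A)·r) and 1 − μ(B⁻(A,r)) ≤ β(μ(A)·r). In particular α_μ(r) ≤ β(r/2) for every r > 0. -/

import Mathlib

open MeasureTheory Real Set Filter

noncomputable section

/-- Forward open `r`-neighborhood `B⁺(A,r)` in an irreversible metric space. -/
def Bplus {X : Type*} (d : X → X → ℝ) (A : Set X) (r : ℝ) : Set X :=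
  {x | ∃ z ∈ A, d z x < r}

/-- Backward open `r`-neighborhood `B⁻(A,r)` in an irreversible metric space. -/
def Bminus {X : Type*} (d : X → X → ℝ) (A : Set X) (r : ℝ) : Set X :=
  {x | ∃ z ∈ A, d x z < r}

/-- `d` is an irreversible metric: nonnegative, vanishing exactly on the
diagonal, and satisfying the triangle inequality (no symmetry assumed). -/
def IsIrrevMetric {X : Type*} (d : X → X → ℝ) : Prop :=
  (∀ x y, 0 ≤ d x y) ∧ (∀ x y, d x y = 0 ↔ x = y) ∧ (∀ x y z, d x z ≤ d x y + d y z)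

/-- The concentration function `α_μ(r)` of an irreversible metric measure space. -/
def concFn {X : Type*} [MeasurableSpace X] (μ : Measure X) (d : X → X → ℝ) (r : ℝ) : ℝ :=
  sSup {v | ∃ A : Set X, MeasurableSet A ∧ 1 / 2 ≤ (μ A).toReal ∧
    v = 1 - min ((μ (Bplus d A r)).toReal) ((μ (Bminus d A r)).toReal)}

private lemma bplus_aux {X : Type*} [MeasurableSpace X] (d : X → X → ℝ)
    (hd : IsIrrevMetric d) (μ : Measure X) [IsProbabilityMeasure μ]
    (β : ℝ → ℝ)
    (h : ∀ f : X → ℝ, (∀ x z, f z - f x ≤ d x z) →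
      ∀ r > 0, (μ {x | r ≤ |f x - ∫ y, f y ∂μ|}).toReal ≤ β r)
    (A : Set X) (hA : MeasurableSet A) (hApos : 0 < (μ A).toReal) (r : ℝ) (hr : 0 < r) :
    1 - (μ (Bplus d A r)).toReal ≤ β ((μ A).toReal * r) := by
  obtain ⟨hd0, hdeq, hdtri⟩ := hd
  have hAne : A.Nonempty := by
    rcases A.eq_empty_or_nonempty with hE | hE
    · rw [hE] at hApos; simp at hApos
    · exact hE
  set a := (μ A).toReal with ha
  have ha1 : a ≤ 1 := by
    have := ENNReal.toReal_mono (a := μ A) (b := 1) ENNReal.one_ne_top prob_le_one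
    simpa using this
  -- the distance-to-A function
  set D : X → ℝ := fun x => sInf ((fun z => d z x) '' A) with hD
  have hDbdd : ∀ x, BddBelow ((fun z => d z x) '' A) := by
    intro x; exact ⟨0, by rintro _ ⟨z, hz, rfl⟩; exact hd0 z x⟩
  have hDne : ∀ x, ((fun z => d z x) '' A).Nonempty := fun x => hAne.image _
  have hD0 : ∀ x, 0 ≤ D x :=
    fun x => le_csInf (hDne x) (by rintro _ ⟨z, hz, rfl⟩; exact hd0 z x)
  have hDA : ∀ x ∈ A, D x = 0 := by
    intro x hx
    refine le_antisymm ?_ (hD0 x)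
    have h1 : D x ≤ d x x := csInf_le (hDbdd x) ⟨x, hx, rfl⟩
    have h2 : d x x = 0 := (hdeq x x).mpr rfl
    linarith
  have hDlip : ∀ x z, D z ≤ D x + d x z := by
    intro x z
    have h1 : D z - d x z ≤ D x := by
      refine le_csInf (hDne x) ?_
      rintro _ ⟨w, hw, rfl⟩
      have h2 : D z ≤ d w z := csInf_le (hDbdd z) ⟨w, hw, rfl⟩
      have h3 := hdtri w x z
      linarith
    linarith
  set f : X → ℝ := fun x => min (D x) r with hf
  have hflip : ∀ x z, f z - f x ≤ d x z := by
    intro x z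
    rcases le_total (D x) r with hc | hc
    · have he : f x = D x := min_eq_left hc
      have h1 : f z ≤ D z := min_le_left _ _
      have := hDlip x z
      linarith
    · have he : f x = r := min_eq_right hc
      have h1 : f z ≤ r := min_le_right _ _
      have := hd0 x z
      linarith
  have hf0 : ∀ x, 0 ≤ f x := fun x => le_min (hD0 x) hr.le
  have hfA : ∀ x ∈ A, f x = 0 := by
    intro x hx; simp [hf, hDA x hx, min_eq_left hr.le]
  have hf_le : ∀ x, f x ≤ Set.indicator Aᶜ (fun _ => r) x := by
    intro x
    by_cases hx : x ∈ A
    · rw [Set.indicator_of_notMem (by simpa using hx), hfA x hx]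
    · rw [Set.indicator_of_mem (by simpa using hx)]
      exact min_le_right _ _
  have hint : Integrable (Set.indicator Aᶜ fun _ => r) μ :=
    (integrable_const r).indicator hA.compl
  have hcompl_meas : (μ Aᶜ).toReal = 1 - a := by
    rw [prob_compl_eq_one_sub hA, ENNReal.toReal_sub_of_le prob_le_one ENNReal.one_ne_top]
    simp [ha]
  have hmean : ∫ y, f y ∂μ ≤ r * (1 - a) := by
    have h1 : ∫ y, f y ∂μ ≤ ∫ y, Set.indicator Aᶜ (fun _ => r) y ∂μ :=
      integral_mono_of_nonneg (Filter.Eventually.of_forall hf0) hint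
        (Filter.Eventually.of_forall hf_le)
    rw [integral_indicator_const _ hA.compl] at h1
    rw [smul_eq_mul, measureReal_def, hcompl_meas] at h1
    linarith [mul_comm ((1:ℝ) - a) r]
  have har : 0 < a * r := mul_pos hApos hr
  have hout : ∀ x, x ∉ Bplus d A r → a * r ≤ |f x - ∫ y, f y ∂μ| := by
    intro x hx
    have hDx : r ≤ D x := by
      refine le_csInf (hDne x) ?_
      rintro _ ⟨z, hz, rfl⟩
      by_contra hlt
      push_neg at hlt
      exact hx ⟨z, hz, hlt⟩
    have hfx : f x = r := min_eq_right hDx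
    have h1 : a * r ≤ f x - ∫ y, f y ∂μ := by
      have : r * (1 - a) = r - a * r := by ring
      rw [hfx]; linarith
    exact le_trans h1 (le_abs_self _)
  -- put it together
  have hsub : (Bplus d A r)ᶜ ⊆ {x | a * r ≤ |f x - ∫ y, f y ∂μ|} :=
    fun x hx => hout x hx
  have hμ1 : (μ (Bplus d A r)ᶜ).toReal ≤ (μ {x | a * r ≤ |f x - ∫ y, f y ∂μ|}).toReal :=
    ENNReal.toReal_mono (measure_ne_top _ _) (measure_mono hsub)
  have hμ2 := h f hflip (a * r) har
  have hμ3 : 1 - (μ (Bplus d A r)).toReal ≤ (μ (Bplus d A r)ᶜ).toReal := by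
    set S := Bplus d A r
    have h1 : (1 : ENNReal) ≤ μ S + μ Sᶜ := by
      calc (1 : ENNReal) = μ univ := (measure_univ (μ := μ)).symm
        _ ≤ μ (S ∪ Sᶜ) := measure_mono (by simp)
        _ ≤ μ S + μ Sᶜ := measure_union_le _ _
    have h2 := ENNReal.toReal_mono
      (ENNReal.add_ne_top.mpr ⟨measure_ne_top _ _, measure_ne_top _ _⟩) h1
    rw [ENNReal.toReal_add (measure_ne_top _ _) (measure_ne_top _ _)] at h2
    simp at h2
    linarith
  linarith

theorem neighborhood_bound_of_mean_tail {X : Type*} [MeasurableSpace X] (d : X → X → ℝ)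
    (hd : IsIrrevMetric d) (μ : Measure X) [IsProbabilityMeasure μ]
    (β : ℝ → ℝ) (hβ0 : ∀ r > 0, 0 ≤ β r) (hβmono : AntitoneOn β (Ioi 0))
    (h : ∀ f : X → ℝ, (∀ x z, f z - f x ≤ d x z) →
      ∀ r > 0, (μ {x | r ≤ |f x - ∫ y, f y ∂μ|}).toReal ≤ β r) :
    (∀ A : Set X, MeasurableSet A → 0 < (μ A).toReal → ∀ r > 0,
      1 - (μ (Bplus d A r)).toReal ≤ β ((μ A).toReal * r) ∧
      1 - (μ (Bminus d A r)).toReal ≤ β ((μ A).toReal * r)) ∧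
    (∀ r > 0, concFn μ d r ≤ β (r / 2)) := by
  obtain ⟨hd0, hdeq, hdtri⟩ := hd
  have hd' : IsIrrevMetric (fun x y => d y x) :=
    ⟨fun x y => hd0 y x, fun x y => by rw [hdeq]; exact eq_comm,
      fun x y z => by have := hdtri z y x; linarith⟩
  have h' : ∀ f : X → ℝ, (∀ x z, f z - f x ≤ (fun x y => d y x) x z) →
      ∀ r > 0, (μ {x | r ≤ |f x - ∫ y, f y ∂μ|}).toReal ≤ β r := by
    intro f hf r hr
    have hlip : ∀ x z, (-f) z - (-f) x ≤ d x z := by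
      intro x z
      have := hf z x
      simpa using by linarith
    have hset : {x | r ≤ |(-f) x - ∫ y, (-f) y ∂μ|} = {x | r ≤ |f x - ∫ y, f y ∂μ|} := by
      ext x
      simp only [Pi.neg_apply, mem_setOf_eq, integral_neg, neg_sub_neg, abs_sub_comm]
    have := h (-f) hlip r hr
    rwa [hset] at this
  have main : ∀ A : Set X, MeasurableSet A → 0 < (μ A).toReal → ∀ r > 0,
      1 - (μ (Bplus d A r)).toReal ≤ β ((μ A).toReal * r) ∧
      1 - (μ (Bminus d A r)).toReal ≤ β ((μ A).toReal * r) := by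
    intro A hA hApos r hr
    refine ⟨bplus_aux d ⟨hd0, hdeq, hdtri⟩ μ β h A hA hApos r hr, ?_⟩
    have := bplus_aux (fun x y => d y x) hd' μ β h' A hA hApos r hr
    have hBeq : Bplus (fun x y => d y x) A r = Bminus d A r := rfl
    rwa [hBeq] at this
  refine ⟨main, ?_⟩
  intro r hr
  refine Real.sSup_le ?_ (hβ0 _ (by positivity))
  rintro v ⟨A, hA, hA2, rfl⟩
  have hApos : 0 < (μ A).toReal := lt_of_lt_of_le (by norm_num) hA2
  obtain ⟨h1, h2⟩ := main A hA hApos r hr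
  have hle : r / 2 ≤ (μ A).toReal * r := by nlinarith
  have hmono : β ((μ A).toReal * r) ≤ β (r / 2) :=
    hβmono (mem_Ioi.mpr (by positivity)) (mem_Ioi.mpr (mul_pos hApos hr)) hle
  rcases min_cases ((μ (Bplus d A r)).toReal) ((μ (Bminus d A r)).toReal) with
    ⟨he, _⟩ | ⟨he, _⟩ <;> rw [he] <;> linarith
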